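/- arXiv:1802.05937 — 2 statements merged into one kernel-verified Lean document; each statement's English description precedes it below -/
import Mathlib

section
/- Full activation identity: Under the hypotheses of the reciprocity lemma, if ∫_Ω c̃(x) ∇γ(x−z)·(η × ∇γ(x−y)) dx = 0 holds for all z in a neighborhood of y in ℝ³∖Ω̄, then for every e ∈ S², ∫_Ω c̃(x) ((x−y)/|x−y|⁶) · (η × e) dx = 0. -/
open Real MeasureTheory Filter Topology

noncomputable def fundSol : EuclideanSpace ℝ (Fin 3) → ℝ := fun x => 1 / (4 * π * ‖x‖)

/-- The cross product on `ℝ³`. -/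
noncomputable def cross3 (a b : EuclideanSpace ℝ (Fin 3)) : EuclideanSpace ℝ (Fin 3) :=
  (WithLp.equiv 2 (Fin 3 → ℝ)).symm
    ![a 1 * b 2 - a 2 * b 1, a 2 * b 0 - a 0 * b 2, a 0 * b 1 - a 1 * b 0]

lemma inner_cross3 (a b c : EuclideanSpace ℝ (Fin 3)) :
    (inner ℝ a (cross3 b c) : ℝ) =
      a 0 * (b 1 * c 2 - b 2 * c 1) + a 1 * (b 2 * c 0 - b 0 * c 2)
        + a 2 * (b 0 * c 1 - b 1 * c 0) := by
  simp [cross3, PiLp.inner_apply, RCLike.inner_apply, Fin.sum_univ_three,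
    WithLp.equiv_symm_apply, WithLp.ofLp_toLp]
  ring

lemma inner_cross3_self (b v : EuclideanSpace ℝ (Fin 3)) :
    (inner ℝ v (cross3 b v) : ℝ) = 0 := by
  rw [inner_cross3]; ring

lemma inner_cross3_swap (e b v : EuclideanSpace ℝ (Fin 3)) :
    (inner ℝ e (cross3 b v) : ℝ) = -(inner ℝ v (cross3 b e) : ℝ) := by
  rw [inner_cross3, inner_cross3]; ring

lemma inner_cross3_smul_right (a b : EuclideanSpace ℝ (Fin 3)) (c : ℝ)
    (v : EuclideanSpace ℝ (Fin 3)) :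
    (inner ℝ a (cross3 b (c • v)) : ℝ) = c * (inner ℝ a (cross3 b v) : ℝ) := by
  rw [inner_cross3, inner_cross3]
  simp only [PiLp.smul_apply, smul_eq_mul]
  ring

lemma grad_fundSol (v : EuclideanSpace ℝ (Fin 3)) (hv : v ≠ 0) :
    gradient fundSol v = (-(4 * π * ‖v‖ ^ 3))⁻¹ • v := by
  have hn : ‖v‖ ≠ 0 := norm_ne_zero_iff.mpr hv
  have hn0 : (0:ℝ) < ‖v‖ := norm_pos_iff.mpr hv
  have hn2 : ‖v‖ ^ 2 ≠ 0 := pow_ne_zero 2 hn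
  have hπ : (4:ℝ) * π ≠ 0 := by positivity
  have hsq : Real.sqrt (‖v‖ ^ 2) = ‖v‖ := Real.sqrt_sq (norm_nonneg v)
  have h1 : HasDerivAt (fun t : ℝ => 4 * π * Real.sqrt t)
      (4 * π * (1 / (2 * Real.sqrt (‖v‖ ^ 2)))) (‖v‖ ^ 2) :=
    (Real.hasDerivAt_sqrt hn2).const_mul (4 * π)
  have h2 : HasDerivAt (fun t : ℝ => (4 * π * Real.sqrt t)⁻¹)
      (-(4 * π * (1 / (2 * Real.sqrt (‖v‖ ^ 2)))) / (4 * π * Real.sqrt (‖v‖ ^ 2)) ^ 2)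
      (‖v‖ ^ 2) := by
    apply h1.inv
    rw [hsq]; exact mul_ne_zero hπ hn
  have h3 : HasFDerivAt (fun x : EuclideanSpace ℝ (Fin 3) => ‖x‖ ^ 2)
      (2 • (innerSL ℝ v)) v := (hasStrictFDerivAt_norm_sq v).hasFDerivAt
  have h4 := h2.comp_hasFDerivAt v h3
  have h5 : HasGradientAt fundSol ((-(4 * π * ‖v‖ ^ 3))⁻¹ • v) v := by
    rw [hasGradientAt_iff_hasFDerivAt]
    have hfun : fundSol = (fun t : ℝ => (4 * π * Real.sqrt t)⁻¹) ∘
        (fun x : EuclideanSpace ℝ (Fin 3) => ‖x‖ ^ 2) := by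
      funext x
      simp [fundSol, Function.comp, Real.sqrt_sq (norm_nonneg x), one_div]
    rw [hfun]
    refine h4.congr_fderiv ?_
    ext u
    simp only [InnerProductSpace.toDual_apply_apply, real_inner_smul_left,
      ContinuousLinearMap.smul_apply, innerSL_apply_apply, smul_eq_mul, hsq]
    have hπ' : π ≠ 0 := ne_of_gt Real.pi_pos
    field_simp
    ring
  exact h5.gradient

/-- Full activation identity: if `∫_Ω c̃(x) ∇γ(x−z)·(η × ∇γ(x−y)) dx = 0` for all `z`
in a neighborhood of `y ∈ ℝ³∖Ω̄`, then for every unit vector `e`,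
`∫_Ω c̃(x) ((x−y)/|x−y|⁶)·(η × e) dx = 0`. -/
theorem stmt13 (Ω : Set (EuclideanSpace ℝ (Fin 3))) (hΩo : IsOpen Ω)
    (hΩc : IsConnected Ω) (hΩb : Bornology.IsBounded Ω)
    (ctil : EuclideanSpace ℝ (Fin 3) → ℝ) (hci : IntegrableOn ctil Ω)
    (hcs : HasCompactSupport ctil) (hcΩ : tsupport ctil ⊆ Ω)
    (y : EuclideanSpace ℝ (Fin 3)) (hy : y ∉ closure Ω) (η : EuclideanSpace ℝ (Fin 3))
    (hzero : ∀ᶠ z in nhds y,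
      ∫ x in Ω, ctil x *
        (inner ℝ (gradient fundSol (x - z)) (cross3 η (gradient fundSol (x - y))) : ℝ) = 0) :
    ∀ e : EuclideanSpace ℝ (Fin 3), ‖e‖ = 1 →
      ∫ x in Ω, ctil x * (inner ℝ ((‖x - y‖ ^ 6)⁻¹ • (x - y)) (cross3 η e) : ℝ) = 0 := by
  intro e he
  set w : EuclideanSpace ℝ (Fin 3) := cross3 η e with hw
  -- distance from y to Ω
  set d : ℝ := Metric.infDist y (closure Ω) with hdd
  have hΩne : (closure Ω).Nonempty := hΩc.nonempty.closure
  have hd : 0 < d := (isClosed_closure.notMem_iff_infDist_pos hΩne).mp hy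
  have hB : ∀ x ∈ Ω, d ≤ ‖x - y‖ := by
    intro x hx
    have := Metric.infDist_le_dist_of_mem (x := y) (subset_closure hx)
    rwa [dist_comm, dist_eq_norm] at this
  obtain ⟨δ, hδ0, hδ⟩ := Metric.eventually_nhds_iff.mp hzero
  set b : ℝ := min δ d / 2 with hbdef
  have hb0 : 0 < b := by positivity
  have hbδ : b < δ := by
    have : min δ d ≤ δ := min_le_left _ _
    simp only [hbdef]; linarith
  have hbd : b ≤ d / 2 := by
    have : min δ d ≤ d := min_le_right _ _
    simp only [hbdef]; linarith
  set a : ℕ → ℝ := fun n => b / (n + 1) with ha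
  have ha0 : ∀ n, 0 < a n := fun n => by positivity
  have hab : ∀ n, a n ≤ b := fun n => by
    rw [ha]
    apply div_le_self hb0.le
    have : (0:ℝ) ≤ (n:ℝ) := Nat.cast_nonneg n
    linarith
  have ha_tendsto : Tendsto a atTop (𝓝 0) := by
    have := tendsto_one_div_add_atTop_nhds_zero_nat.const_mul b
    simpa [ha, mul_one_div, div_eq_mul_inv] using this
  -- the family of integrands
  set g : ℝ → EuclideanSpace ℝ (Fin 3) → ℝ := fun ε x =>
    ctil x * ((inner ℝ (x - y) w : ℝ) *
      ((4 * π * ‖x - y + ε • e‖ ^ 3)⁻¹ * (4 * π * ‖x - y‖ ^ 3)⁻¹)) with hg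
  have hπ0 : (0:ℝ) < π := Real.pi_pos
  -- Claim A : for each n the integral of g (a n) vanishes
  have key : ∀ n, ∫ x in Ω, g (a n) x = 0 := by
    intro n
    set ε : ℝ := a n with hε
    have hε0 : 0 < ε := ha0 n
    have hεb : ε ≤ b := hab n
    have hεd : ε ≤ d / 2 := hεb.trans hbd
    set z : EuclideanSpace ℝ (Fin 3) := y - ε • e with hz
    have hdist : dist z y < δ := by
      rw [dist_eq_norm, hz]
      simp only [sub_sub_cancel_left, norm_neg, norm_smul, he, mul_one,
        Real.norm_eq_abs, abs_of_pos hε0]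
      exact lt_of_le_of_lt hεb hbδ
    have h0 := hδ hdist
    have hEq : Set.EqOn (fun x => (-ε) * g ε x)
        (fun x => ctil x *
          (inner ℝ (gradient fundSol (x - z)) (cross3 η (gradient fundSol (x - y))) : ℝ)) Ω := by
      intro x hx
      have hxy : d ≤ ‖x - y‖ := hB x hx
      have hxy0 : x - y ≠ 0 := by
        intro h
        rw [h, norm_zero] at hxy; linarith
      have hxzeq : x - z = x - y + ε • e := by rw [hz]; abel
      have hxzn : d / 2 ≤ ‖x - y + ε • e‖ := by
        have h1 : ‖x - y‖ ≤ ‖x - y + ε • e‖ + ‖ε • e‖ := by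
          calc ‖x - y‖ = ‖(x - y + ε • e) + (-(ε • e))‖ := by rw [add_neg_cancel_right]
          _ ≤ ‖x - y + ε • e‖ + ‖-(ε • e)‖ := norm_add_le _ _
          _ = ‖x - y + ε • e‖ + ‖ε • e‖ := by rw [norm_neg]
        have h2 : ‖ε • e‖ = ε := by
          rw [norm_smul, he, mul_one, Real.norm_eq_abs, abs_of_pos hε0]
        rw [h2] at h1
        linarith
      have hxz0 : x - z ≠ 0 := by
        rw [hxzeq]
        intro h
        rw [h, norm_zero] at hxzn; linarith
      simp only
      rw [grad_fundSol _ hxz0, grad_fundSol _ hxy0, real_inner_smul_left,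
        inner_cross3_smul_right, hxzeq, inner_add_left, inner_cross3_self,
        real_inner_smul_left, inner_cross3_swap, ← hw, hg]
      simp only [inv_neg]
      ring
    have h1 : (-ε) * ∫ x in Ω, g ε x = 0 := by
      rw [← integral_const_mul]
      rw [setIntegral_congr_fun hΩo.measurableSet hEq]
      exact h0
    have hεne : (-ε) ≠ 0 := by linarith
    exact (mul_eq_zero.mp h1).resolve_left hεne
  -- Claim B : dominated convergence
  set K : ℝ := ‖w‖ * ((4 * π * (d / 2) ^ 3)⁻¹ * (4 * π * d ^ 2)⁻¹) with hK
  have hKnn : 0 ≤ K := by positivity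
  have hmeas : ∀ n, AEStronglyMeasurable (g (a n)) (volume.restrict Ω) := by
    intro n
    apply hci.aestronglyMeasurable.mul
    apply Measurable.aestronglyMeasurable
    apply Measurable.mul
    · exact (Continuous.inner (continuous_id.sub continuous_const)
        continuous_const).measurable
    · apply Measurable.mul
      · exact ((continuous_const.mul
          (((continuous_id.sub continuous_const).add continuous_const).norm.pow 3)).measurable).inv
      · exact ((continuous_const.mul
          ((continuous_id.sub continuous_const).norm.pow 3)).measurable).inv
  have hbound : ∀ n, ∀ᵐ x ∂(volume.restrict Ω), ‖g (a n) x‖ ≤ |ctil x| * K := by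
    intro n
    rw [ae_restrict_iff' hΩo.measurableSet]
    apply ae_of_all
    intro x hx
    have hxy : d ≤ ‖x - y‖ := hB x hx
    have hxyn : (0:ℝ) < ‖x - y‖ := lt_of_lt_of_le hd hxy
    have hxzn : d / 2 ≤ ‖x - y + a n • e‖ := by
      have h1 : ‖x - y‖ ≤ ‖x - y + a n • e‖ + ‖a n • e‖ := by
        calc ‖x - y‖ = ‖(x - y + a n • e) + (-(a n • e))‖ := by rw [add_neg_cancel_right]
        _ ≤ ‖x - y + a n • e‖ + ‖-(a n • e)‖ := norm_add_le _ _
        _ = ‖x - y + a n • e‖ + ‖a n • e‖ := by rw [norm_neg]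
      have h2 : ‖a n • e‖ = a n := by
        rw [norm_smul, he, mul_one, Real.norm_eq_abs, abs_of_pos (ha0 n)]
      have h3 : a n ≤ d / 2 := (hab n).trans hbd
      rw [h2] at h1
      linarith
    have hA0 : (0:ℝ) < ‖x - y + a n • e‖ := lt_of_lt_of_le (by positivity) hxzn
    rw [Real.norm_eq_abs, hg]
    simp only
    rw [abs_mul, abs_mul]
    rw [hK]
    rw [← mul_assoc]
    have step1 : |(inner ℝ (x - y) w : ℝ)| ≤ ‖x - y‖ * ‖w‖ := abs_real_inner_le_norm _ _
    have step2 : |(4 * π * ‖x - y + a n • e‖ ^ 3)⁻¹ * (4 * π * ‖x - y‖ ^ 3)⁻¹|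
        = (4 * π * ‖x - y + a n • e‖ ^ 3)⁻¹ * (4 * π * ‖x - y‖ ^ 3)⁻¹ := by
      apply abs_of_nonneg; positivity
    rw [step2, mul_assoc]
    apply mul_le_mul_of_nonneg_left _ (abs_nonneg _)
    calc |(inner ℝ (x - y) w : ℝ)| * ((4 * π * ‖x - y + a n • e‖ ^ 3)⁻¹ * (4 * π * ‖x - y‖ ^ 3)⁻¹)
        ≤ (‖x - y‖ * ‖w‖) * ((4 * π * (d / 2) ^ 3)⁻¹ * (4 * π * ‖x - y‖ ^ 3)⁻¹) := by
          apply mul_le_mul step1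
          · apply mul_le_mul_of_nonneg_right _ (by positivity)
            apply inv_anti₀ (by positivity)
            gcongr
          · positivity
          · positivity
      _ = ‖w‖ * ((4 * π * (d / 2) ^ 3)⁻¹ * (‖x - y‖ * (4 * π * ‖x - y‖ ^ 3)⁻¹)) := by ring
      _ ≤ ‖w‖ * ((4 * π * (d / 2) ^ 3)⁻¹ * (4 * π * d ^ 2)⁻¹) := by
          apply mul_le_mul_of_nonneg_left _ (norm_nonneg w)
          apply mul_le_mul_of_nonneg_left _ (by positivity)
          have heq : ‖x - y‖ * (4 * π * ‖x - y‖ ^ 3)⁻¹ = (4 * π * ‖x - y‖ ^ 2)⁻¹ := by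
            field_simp
          rw [heq]
          apply inv_anti₀ (by positivity)
          gcongr
  have hbi : Integrable (fun x => |ctil x| * K) (volume.restrict Ω) :=
    hci.abs.mul_const K
  have hlim : ∀ᵐ x ∂(volume.restrict Ω),
      Tendsto (fun n => g (a n) x) atTop (𝓝 (g 0 x)) := by
    rw [ae_restrict_iff' hΩo.measurableSet]
    apply ae_of_all
    intro x hx
    have hxy : d ≤ ‖x - y‖ := hB x hx
    have hxyn : (0:ℝ) < ‖x - y‖ := lt_of_lt_of_le hd hxy
    have hcont : ContinuousAt (fun ε : ℝ => g ε x) 0 := by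
      apply ContinuousAt.mul continuousAt_const
      apply ContinuousAt.mul continuousAt_const
      apply ContinuousAt.mul _ continuousAt_const
      apply ContinuousAt.inv₀
      · exact (continuous_const.mul
          ((continuous_const.add (continuous_id.smul continuous_const)).norm.pow 3)).continuousAt
      · simp only [zero_smul, add_zero]
        positivity
    exact hcont.tendsto.comp ha_tendsto
  have hconv := tendsto_integral_of_dominated_convergence (μ := volume.restrict Ω)
    (fun x => |ctil x| * K) hmeas hbi hbound hlim
  have hzero' : ∫ x in Ω, g 0 x = 0 := by
    have h2 : Tendsto (fun n => ∫ x in Ω, g (a n) x) atTop (𝓝 0) := by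
      simp only [key]
      exact tendsto_const_nhds
    exact tendsto_nhds_unique hconv h2
  -- relate the target integral with ∫ g 0
  have hfinal : ∀ x ∈ Ω, ctil x * (inner ℝ ((‖x - y‖ ^ 6)⁻¹ • (x - y)) (cross3 η e) : ℝ)
      = (16 * π ^ 2) * g 0 x := by
    intro x hx
    have hxyn : (0:ℝ) < ‖x - y‖ := lt_of_lt_of_le hd (hB x hx)
    have hne : ‖x - y‖ ≠ 0 := ne_of_gt hxyn
    rw [real_inner_smul_left, hg]
    simp only [zero_smul, add_zero, ← hw]
    have hπne : π ≠ 0 := ne_of_gt hπ0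
    field_simp
    ring
  calc ∫ x in Ω, ctil x * (inner ℝ ((‖x - y‖ ^ 6)⁻¹ • (x - y)) (cross3 η e) : ℝ)
      = ∫ x in Ω, (16 * π ^ 2) * g 0 x := by
        apply setIntegral_congr_fun hΩo.measurableSet
        intro x hx
        exact hfinal x hx
    _ = (16 * π ^ 2) * ∫ x in Ω, g 0 x := integral_const_mul _ _
    _ = 0 := by rw [hzero']; ring
end

section
/- Small-coil (dipole) expansion: Let φ: [0,L] → ℝ³ be a C² curve with ∫₀^L φ'(s) ds = 0, y its center of mass, and M = 4π ∫₀^L φ'(s) ⊗ (φ(s) − y) ds. Then the first-order Taylor expansion of the Biot–Savart field gives ∫₀^L φ'(s) × ∇F(w)(φ(s) − y) ds = ∇ × (Mᵀ ∇γ(w−y)) up to the stated matrix transposition convention, where F(w,v) = (w−v)/|w−v|³ and ∇F is its Jacobian in v at v = y. -/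
open Real

/-- The curl of a vector field on `ℝ³`. -/
noncomputable def curl3 (F : EuclideanSpace ℝ (Fin 3) → EuclideanSpace ℝ (Fin 3))
    (w : EuclideanSpace ℝ (Fin 3)) : EuclideanSpace ℝ (Fin 3) :=
  (WithLp.equiv 2 (Fin 3 → ℝ)).symm
    ![fderiv ℝ (fun x => F x 2) w (EuclideanSpace.single 1 1)
        - fderiv ℝ (fun x => F x 1) w (EuclideanSpace.single 2 1),
      fderiv ℝ (fun x => F x 0) w (EuclideanSpace.single 2 1)
        - fderiv ℝ (fun x => F x 2) w (EuclideanSpace.single 0 1),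
      fderiv ℝ (fun x => F x 1) w (EuclideanSpace.single 0 1)
        - fderiv ℝ (fun x => F x 0) w (EuclideanSpace.single 1 1)]

local notation "E3" => EuclideanSpace ℝ (Fin 3)

lemma hasFDerivAt_norm3 {z : E3} (hz : z ≠ 0) :
    HasFDerivAt (fun x : E3 => ‖x‖) (‖z‖⁻¹ • innerSL ℝ z) z := by
  have hn : ‖z‖ ≠ 0 := norm_ne_zero_iff.mpr hz
  set q : E3 → ℝ := fun x => (inner ℝ x x : ℝ) with hqdef
  have hq : (0:ℝ) < q z := by
    simp only [hqdef, real_inner_self_eq_norm_sq]; positivity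
  have h1 : HasFDerivAt q
      ((fderivInnerCLM ℝ (z, z)).comp ((ContinuousLinearMap.id ℝ E3).prod
        (ContinuousLinearMap.id ℝ E3))) z :=
    (hasFDerivAt_id z).inner ℝ (hasFDerivAt_id z)
  have h2 : HasFDerivAt (fun x : E3 => Real.sqrt (q x))
      ((1 / (2 * Real.sqrt (q z))) •
        ((fderivInnerCLM ℝ (z, z)).comp ((ContinuousLinearMap.id ℝ E3).prod
          (ContinuousLinearMap.id ℝ E3)))) z :=
    (Real.hasDerivAt_sqrt hq.ne').comp_hasFDerivAt z h1
  have heq : (fun x : E3 => Real.sqrt (q x)) = fun x : E3 => ‖x‖ := by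
    funext x
    show Real.sqrt (inner ℝ x x : ℝ) = ‖x‖
    rw [real_inner_self_eq_norm_sq]
    exact Real.sqrt_sq (norm_nonneg x)
  rw [heq] at h2
  refine h2.congr_fderiv ?_
  ext u
  simp only [ContinuousLinearMap.smul_apply, innerSL_apply_apply, ContinuousLinearMap.comp_apply,
    ContinuousLinearMap.prod_apply, ContinuousLinearMap.id_apply, fderivInnerCLM_apply,
    smul_eq_mul, hqdef]
  rw [real_inner_self_eq_norm_sq, Real.sqrt_sq (norm_nonneg z), real_inner_comm u z]
  field_simp
  ring

lemma hasFDerivAt_invcube_comp {w y : E3} (h : w - y ≠ 0) :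
    HasFDerivAt (fun v : E3 => (‖w - v‖ ^ 3)⁻¹)
      ((-(3 * ‖w - y‖ ^ 2) / (‖w - y‖ ^ 3) ^ 2) •
        ((‖w - y‖⁻¹ • innerSL ℝ (w - y)).comp (-(ContinuousLinearMap.id ℝ E3)))) y := by
  have hn : ‖w - y‖ ≠ 0 := norm_ne_zero_iff.mpr h
  have hsub : HasFDerivAt (fun v : E3 => w - v) (-(ContinuousLinearMap.id ℝ E3)) y :=
    (hasFDerivAt_id y).const_sub w
  have hnorm : HasFDerivAt (fun v : E3 => ‖w - v‖)
      ((‖w - y‖⁻¹ • innerSL ℝ (w - y)).comp (-(ContinuousLinearMap.id ℝ E3))) y :=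
    (hasFDerivAt_norm3 h).comp y hsub
  have hcube : HasDerivAt (fun t : ℝ => (t ^ 3)⁻¹)
      (-(3 * ‖w - y‖ ^ 2) / (‖w - y‖ ^ 3) ^ 2) ‖w - y‖ := by
    have := (hasDerivAt_pow 3 ‖w - y‖).inv (pow_ne_zero 3 hn)
    exact this.congr_deriv (by norm_num)
  exact HasDerivAt.comp_hasFDerivAt (h₂ := fun t : ℝ => (t ^ 3)⁻¹) y hcube hnorm

lemma fderiv_G_apply {w y : E3} (h : w ≠ y) (u : E3) (j : Fin 3) :
    fderiv ℝ (fun v : E3 => (‖w - v‖ ^ 3)⁻¹ • (w - v)) y u j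
      = -((‖w - y‖ ^ 3)⁻¹ * u j)
        + 3 * (‖w - y‖ ^ 5)⁻¹ * (inner ℝ (w - y) u : ℝ) * (w - y) j := by
  have hne : w - y ≠ 0 := sub_ne_zero.mpr h
  have hn : ‖w - y‖ ≠ 0 := norm_ne_zero_iff.mpr hne
  have hsub : HasFDerivAt (fun v : E3 => w - v) (-(ContinuousLinearMap.id ℝ E3)) y :=
    (hasFDerivAt_id y).const_sub w
  have hG := (hasFDerivAt_invcube_comp hne).smul hsub
  rw [HasFDerivAt.fderiv (f := fun v : E3 => (‖w - v‖ ^ 3)⁻¹ • (w - v)) hG]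
  simp only [ContinuousLinearMap.add_apply, ContinuousLinearMap.smul_apply,
    ContinuousLinearMap.comp_apply, ContinuousLinearMap.neg_apply, ContinuousLinearMap.id_apply,
    ContinuousLinearMap.smulRight_apply, innerSL_apply_apply, PiLp.add_apply, PiLp.smul_apply,
    PiLp.neg_apply, PiLp.sub_apply, smul_eq_mul, inner_neg_right]
  field_simp

lemma gradient_fundSol {z : E3} (hz : z ≠ 0) :
    gradient fundSol z = (-(4 * π)⁻¹ * (‖z‖ ^ 3)⁻¹) • z := by
  have hn : ‖z‖ ≠ 0 := norm_ne_zero_iff.mpr hz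
  apply HasGradientAt.gradient
  rw [hasGradientAt_iff_hasFDerivAt]
  have h1 := hasFDerivAt_norm3 hz
  have hinv : HasDerivAt (fun t : ℝ => t⁻¹) (-(‖z‖ ^ 2)⁻¹) ‖z‖ := by
    simpa using hasDerivAt_inv hn
  have h2 := hinv.comp_hasFDerivAt z h1
  have h3 := h2.const_mul ((4 * π)⁻¹)
  have h3' : HasFDerivAt fundSol
      ((4 * π)⁻¹ • (-(‖z‖ ^ 2)⁻¹ • ‖z‖⁻¹ • innerSL ℝ z)) z :=
    h3.congr_of_eventuallyEq (Filter.Eventually.of_forall fun x => by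
      simp [fundSol, Function.comp, mul_inv]; ring)
  refine h3'.congr_fderiv ?_
  ext u
  simp only [InnerProductSpace.toDual_apply_apply, ContinuousLinearMap.smul_apply, innerSL_apply_apply,
    smul_eq_mul, real_inner_smul_left]
  have h5 : (‖z‖ ^ 3)⁻¹ = (‖z‖ ^ 2)⁻¹ * ‖z‖⁻¹ := by
    rw [← mul_inv]; norm_num [pow_succ]
  rw [h5]; ring

noncomputable def gradD (y w : E3) (j : Fin 3) : E3 →L[ℝ] ℝ :=
  (-(4 * π)⁻¹) • ((‖w - y‖ ^ 3)⁻¹ •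
      (EuclideanSpace.proj j : E3 →L[ℝ] ℝ).comp (ContinuousLinearMap.id ℝ E3)
    + ((w - y) j) • ((-(3 * ‖w - y‖ ^ 2) / (‖w - y‖ ^ 3) ^ 2) •
        (‖w - y‖⁻¹ • innerSL ℝ (w - y)).comp (ContinuousLinearMap.id ℝ E3)))

lemma hasFDerivAt_gradcomp (y : E3) {w : E3} (h : w ≠ y) (j : Fin 3) :
    HasFDerivAt (fun x : E3 => gradient fundSol (x - y) j) (gradD y w j) w := by
  have hne : w - y ≠ 0 := sub_ne_zero.mpr h
  have hn : ‖w - y‖ ≠ 0 := norm_ne_zero_iff.mpr hne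
  have hsub : HasFDerivAt (fun x : E3 => x - y) (ContinuousLinearMap.id ℝ E3) w := by
    simpa using (hasFDerivAt_id w).sub_const y
  have hnorm : HasFDerivAt (fun x : E3 => ‖x - y‖)
      ((‖w - y‖⁻¹ • innerSL ℝ (w - y)).comp (ContinuousLinearMap.id ℝ E3)) w :=
    (hasFDerivAt_norm3 hne).comp w hsub
  have hcube : HasDerivAt (fun t : ℝ => (t ^ 3)⁻¹)
      (-(3 * ‖w - y‖ ^ 2) / (‖w - y‖ ^ 3) ^ 2) ‖w - y‖ := by
    have := (hasDerivAt_pow 3 ‖w - y‖).inv (pow_ne_zero 3 hn)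
    exact this.congr_deriv (by norm_num)
  have hic := HasDerivAt.comp_hasFDerivAt (h₂ := fun t : ℝ => (t ^ 3)⁻¹) w hcube hnorm
  have hproj : HasFDerivAt (fun x : E3 => (x - y) j)
      ((EuclideanSpace.proj j : E3 →L[ℝ] ℝ).comp (ContinuousLinearMap.id ℝ E3)) w := by
    exact (EuclideanSpace.proj j).hasFDerivAt.comp w hsub
  have hprod := hic.mul hproj
  have hc := hprod.const_mul (-(4 * π)⁻¹)
  have hev : (fun x : E3 => gradient fundSol (x - y) j)
      =ᶠ[nhds w] fun x : E3 => -(4 * π)⁻¹ * ((‖x - y‖ ^ 3)⁻¹ * (x - y) j) := by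
    have hopen : IsOpen {x : E3 | x ≠ y} := isOpen_ne
    filter_upwards [hopen.mem_nhds h] with x hx
    rw [gradient_fundSol (sub_ne_zero.mpr hx)]
    simp only [PiLp.smul_apply, smul_eq_mul]
    ring
  exact (hc.congr_of_eventuallyEq hev : _)

lemma gradD_apply (y w : E3) (j k : Fin 3) :
    gradD y w j (EuclideanSpace.single k 1)
      = -(4 * π)⁻¹ * ((‖w - y‖ ^ 3)⁻¹ * (if k = j then 1 else 0)
        + (w - y) j * ((-(3 * ‖w - y‖ ^ 2) / (‖w - y‖ ^ 3) ^ 2) * (‖w - y‖⁻¹ * (w - y) k))) := by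
  simp only [gradD, ContinuousLinearMap.smul_apply, ContinuousLinearMap.add_apply,
    ContinuousLinearMap.comp_apply, ContinuousLinearMap.id_apply, innerSL_apply_apply,
    PiLp.proj_apply, EuclideanSpace.single_apply, smul_eq_mul,
    EuclideanSpace.inner_single_right, map_one, mul_one, starRingEnd_apply, star_trivial]
  by_cases hkj : k = j
  · subst hkj; simp only [if_pos rfl]; ring
  · rw [if_neg hkj, if_neg (Ne.symm hkj)]; ring

set_option maxHeartbeats 1000000 in
/-- Small-coil (dipole) expansion: for a `C²` closed coil `φ` with vanishing effective
orientation `∫₀^L φ'(s) ds = 0`, center of mass `y`, and dipole matrix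
`M = 4π ∫₀^L φ'(s) ⊗ (φ(s) − y) ds`, the first-order term of the Biot–Savart field is
`∫₀^L φ'(s) × ∇F(w)(φ(s) − y) ds = ∇ × (Mᵀ ∇γ(w−y))`, with `F(w,v) = (w−v)/|w−v|³`. -/
theorem stmt17 (Lc : ℝ) (hL : 0 < Lc) (φ : ℝ → EuclideanSpace ℝ (Fin 3))
    (hφ : ContDiff ℝ 2 φ)
    (hclosed : ∫ s in (0 : ℝ)..Lc, deriv φ s = 0)
    (y : EuclideanSpace ℝ (Fin 3)) (hy : y = Lc⁻¹ • ∫ s in (0 : ℝ)..Lc, φ s)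
    (M : Fin 3 → Fin 3 → ℝ)
    (hM : ∀ i j, M i j = 4 * π * ∫ s in (0 : ℝ)..Lc, deriv φ s i * (φ s - y) j)
    (w : EuclideanSpace ℝ (Fin 3)) (hw : w ∉ φ '' Set.Icc 0 Lc) (hwy : w ≠ y) :
    ∫ s in (0 : ℝ)..Lc,
        cross3 (deriv φ s)
          (fderiv ℝ (fun v : EuclideanSpace ℝ (Fin 3) => (‖w - v‖ ^ 3)⁻¹ • (w - v)) y
            (φ s - y))
      = curl3 (fun w' =>
          (WithLp.equiv 2 (Fin 3 → ℝ)).symm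
            (fun i => ∑ j, M j i * gradient fundSol (w' - y) j)) w := by
  classical
  have hr : w - y ≠ 0 := sub_ne_zero.mpr hwy
  have hn : ‖w - y‖ ≠ 0 := norm_ne_zero_iff.mpr hr
  set T := fderiv ℝ (fun v : E3 => (‖w - v‖ ^ 3)⁻¹ • (w - v)) y with hT
  set m : Fin 3 → Fin 3 → ℝ :=
    fun a b => ∫ s in (0 : ℝ)..Lc, deriv φ s a * (φ s - y) b with hmdef
  have hM' : ∀ i j, M i j = 4 * π * m i j := fun i j => hM i j
  -- continuity facts
  have hφc : Continuous φ := hφ.continuous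
  have hdc : Continuous (deriv φ) := hφ.continuous_deriv (by norm_num)
  have hca : ∀ a : Fin 3, Continuous fun s => deriv φ s a := fun a => by
    exact (EuclideanSpace.proj a).continuous.comp hdc
  have hub : ∀ b : Fin 3, Continuous fun s => (φ s - y) b := fun b => by
    exact (EuclideanSpace.proj b).continuous.comp (hφc.sub continuous_const)
  have hg : ∀ a b : Fin 3, IntervalIntegrable (fun s => deriv φ s a * (φ s - y) b)
      MeasureTheory.volume 0 Lc := fun a b => ((hca a).mul (hub b)).intervalIntegrable 0 Lc
  -- linearity of the integral
  have hsum : ∀ C : Fin 3 → Fin 3 → ℝ,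
      (∫ s in (0 : ℝ)..Lc, ∑ a, ∑ b, C a b * (deriv φ s a * (φ s - y) b))
        = ∑ a, ∑ b, C a b * m a b := by
    intro C
    have h1 : ∀ a b : Fin 3, IntervalIntegrable
        (fun s => C a b * (deriv φ s a * (φ s - y) b)) MeasureTheory.volume 0 Lc :=
      fun a b => (hg a b).const_mul _
    have hcont1 : ∀ a : Fin 3, Continuous
        (fun s => ∑ b : Fin 3, C a b * (deriv φ s a * (φ s - y) b)) :=
      fun a => continuous_finset_sum _ fun b _ =>
        continuous_const.mul ((hca a).mul (hub b))
    symm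
    calc ∑ a : Fin 3, ∑ b : Fin 3, C a b * m a b
        = ∑ a : Fin 3, ∑ b : Fin 3, ∫ s in (0 : ℝ)..Lc,
            C a b * (deriv φ s a * (φ s - y) b) :=
          Finset.sum_congr rfl fun a _ => Finset.sum_congr rfl fun b _ =>
            (intervalIntegral.integral_const_mul _ _).symm
      _ = ∑ a : Fin 3, ∫ s in (0 : ℝ)..Lc, ∑ b : Fin 3,
            C a b * (deriv φ s a * (φ s - y) b) :=
          Finset.sum_congr rfl fun a _ =>
            (intervalIntegral.integral_finset_sum
              (f := fun b s => C a b * (deriv φ s a * (φ s - y) b))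
              (fun b _ => h1 a b)).symm
      _ = ∫ s in (0 : ℝ)..Lc, ∑ a : Fin 3, ∑ b : Fin 3,
            C a b * (deriv φ s a * (φ s - y) b) :=
          (intervalIntegral.integral_finset_sum
            (f := fun a s => ∑ b : Fin 3, C a b * (deriv φ s a * (φ s - y) b))
            (fun a _ => (hcont1 a).intervalIntegrable 0 Lc)).symm
  -- closedness
  have hder : ∀ s : ℝ, HasDerivAt φ (deriv φ s) s :=
    fun s => ((hφ.differentiable (by norm_num)) s).hasDerivAt
  have hend : φ Lc = φ 0 := by
    have hftc : ∫ s in (0 : ℝ)..Lc, deriv φ s = φ Lc - φ 0 :=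
      intervalIntegral.integral_eq_sub_of_hasDerivAt (fun s _ => hder s)
        (hdc.intervalIntegrable 0 Lc)
    rw [hclosed] at hftc
    have := hftc.symm
    rwa [sub_eq_zero] at this
  -- antisymmetry of m
  have hskew : ∀ a b : Fin 3, m b a = - m a b := by
    intro a b
    have hprod : ∀ s : ℝ, HasDerivAt (fun t => (φ t - y) a * (φ t - y) b)
        (deriv φ s a * (φ s - y) b + deriv φ s b * (φ s - y) a) s := by
      intro s
      have h1 : HasDerivAt (fun t => (φ t - y) a) (deriv φ s a) s := by
        exact (EuclideanSpace.proj a).hasFDerivAt.comp_hasDerivAt s ((hder s).sub_const y)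
      have h2 : HasDerivAt (fun t => (φ t - y) b) (deriv φ s b) s := by
        exact (EuclideanSpace.proj b).hasFDerivAt.comp_hasDerivAt s ((hder s).sub_const y)
      have := h1.mul h2
      refine this.congr_deriv ?_
      ring
    have h3 : (∫ s in (0 : ℝ)..Lc,
        (deriv φ s a * (φ s - y) b + deriv φ s b * (φ s - y) a))
          = (φ Lc - y) a * (φ Lc - y) b - (φ 0 - y) a * (φ 0 - y) b :=
      intervalIntegral.integral_eq_sub_of_hasDerivAt (fun s _ => hprod s)
        ((((hca a).mul (hub b)).add ((hca b).mul (hub a))).intervalIntegrable 0 Lc)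
    rw [hend, sub_self] at h3
    rw [intervalIntegral.integral_add (hg a b) (hg b a)] at h3
    have : m a b + m b a = 0 := h3
    linarith
  have hdiag : ∀ a : Fin 3, m a a = 0 := by
    intro a; have := hskew a a; linarith
  -- value of T
  have hTval : ∀ (u : E3) (j : Fin 3), T u j
      = -((‖w - y‖ ^ 3)⁻¹ * u j)
        + 3 * (‖w - y‖ ^ 5)⁻¹ * (∑ l, (w - y) l * u l) * (w - y) j := by
    intro u j
    rw [hT, fderiv_G_apply hwy u j, PiLp.inner_apply]
    norm_num [RCLike.inner_apply]
    exact Or.inl (Or.inl (Finset.sum_congr rfl fun i _ => mul_comm _ _))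
  -- continuity of the integrand
  have hTu : ∀ b : Fin 3, Continuous fun s => T (φ s - y) b := fun b => by
    exact (EuclideanSpace.proj b).continuous.comp
      (T.continuous.comp (hφc.sub continuous_const))
  have hX : Continuous fun s => cross3 (deriv φ s) (T (φ s - y)) := by
    unfold cross3
    refine Continuous.comp (PiLp.continuous_toLp 2 (fun _ : Fin 3 => ℝ)) ?_
    refine continuous_pi fun i => ?_
    fin_cases i
    · exact ((hca 1).mul (hTu 2)).sub ((hca 2).mul (hTu 1))
    · exact ((hca 2).mul (hTu 0)).sub ((hca 0).mul (hTu 2))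
    · exact ((hca 0).mul (hTu 1)).sub ((hca 1).mul (hTu 0))
  have hcomp : ∀ i : Fin 3, (∫ s in (0 : ℝ)..Lc, cross3 (deriv φ s) (T (φ s - y))) i
      = ∫ s in (0 : ℝ)..Lc, cross3 (deriv φ s) (T (φ s - y)) i := by
    intro i
    have := (EuclideanSpace.proj i : E3 →L[ℝ] ℝ).intervalIntegral_comp_comm
      (hX.intervalIntegrable (μ := MeasureTheory.volume) 0 Lc)
    exact this.symm
  -- derivative of the vector potential components
  have hcurl : ∀ (l k : Fin 3),
      fderiv ℝ (fun x : E3 => ∑ j, M j l * gradient fundSol (x - y) j) w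
          (EuclideanSpace.single k 1)
        = ∑ j, M j l * gradD y w j (EuclideanSpace.single k 1) := by
    intro l k
    have hH : HasFDerivAt (fun x : E3 => ∑ j, M j l * gradient fundSol (x - y) j)
        (∑ j, (M j l) • gradD y w j) w :=
      HasFDerivAt.fun_sum fun j _ => (hasFDerivAt_gradcomp y hwy j).const_mul (M j l)
    rw [hH.fderiv]
    simp [ContinuousLinearMap.sum_apply, ContinuousLinearMap.smul_apply, smul_eq_mul]
  -- the coefficient matrices
  set C0 : Fin 3 → Fin 3 → ℝ :=
    ![![0, 0, 0],
      ![3 * (‖w - y‖ ^ 5)⁻¹ * (w - y) 2 * (w - y) 0,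
        3 * (‖w - y‖ ^ 5)⁻¹ * (w - y) 2 * (w - y) 1,
        3 * (‖w - y‖ ^ 5)⁻¹ * (w - y) 2 * (w - y) 2 - (‖w - y‖ ^ 3)⁻¹],
      ![-(3 * (‖w - y‖ ^ 5)⁻¹ * (w - y) 1 * (w - y) 0),
        (‖w - y‖ ^ 3)⁻¹ - 3 * (‖w - y‖ ^ 5)⁻¹ * (w - y) 1 * (w - y) 1,
        -(3 * (‖w - y‖ ^ 5)⁻¹ * (w - y) 1 * (w - y) 2)]] with hC0
  have hf0 : (fun s => cross3 (deriv φ s) (T (φ s - y)) 0)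
      = fun s => ∑ a, ∑ b, C0 a b * (deriv φ s a * (φ s - y) b) := by
    funext s
    show deriv φ s 1 * T (φ s - y) 2 - deriv φ s 2 * T (φ s - y) 1 = _
    rw [hTval, hTval]
    simp only [hC0, Fin.sum_univ_three, Matrix.cons_val_zero, Matrix.cons_val_one,
      Matrix.head_cons, Matrix.cons_val_two, Matrix.tail_cons]
    ring
  have comp0 : (∫ s in (0 : ℝ)..Lc, cross3 (deriv φ s) (T (φ s - y))) 0
      = curl3 (fun w' =>
          (WithLp.equiv 2 (Fin 3 → ℝ)).symm
            (fun i => ∑ j, M j i * gradient fundSol (w' - y) j)) w 0 := by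
    rw [hcomp 0, hf0, hsum C0]
    have hR : curl3 (fun w' =>
          (WithLp.equiv 2 (Fin 3 → ℝ)).symm
            (fun i => ∑ j, M j i * gradient fundSol (w' - y) j)) w 0
        = (∑ j, M j 2 * gradD y w j (EuclideanSpace.single 1 1))
          - (∑ j, M j 1 * gradD y w j (EuclideanSpace.single 2 1)) := by
      show fderiv ℝ (fun x : E3 => ∑ j, M j 2 * gradient fundSol (x - y) j) w
          (EuclideanSpace.single 1 1)
        - fderiv ℝ (fun x : E3 => ∑ j, M j 1 * gradient fundSol (x - y) j) w
          (EuclideanSpace.single 2 1) = _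
      rw [hcurl 2 1, hcurl 1 2]
    rw [hR]
    simp only [hC0, Fin.sum_univ_three, Matrix.cons_val_zero, Matrix.cons_val_one,
      Matrix.head_cons, Matrix.cons_val_two, Matrix.tail_cons, gradD_apply, hM',
      hdiag, Fin.reduceEq, reduceIte, mul_zero, zero_mul, add_zero, zero_add, mul_one, one_mul]
    rw [hskew 0 1, hskew 0 2, hskew 1 2]
    field_simp
    ring
  set C1 : Fin 3 → Fin 3 → ℝ :=
    ![![-(3 * (‖w - y‖ ^ 5)⁻¹ * (w - y) 2 * (w - y) 0),
        -(3 * (‖w - y‖ ^ 5)⁻¹ * (w - y) 2 * (w - y) 1),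
        (‖w - y‖ ^ 3)⁻¹ - 3 * (‖w - y‖ ^ 5)⁻¹ * (w - y) 2 * (w - y) 2],
      ![0, 0, 0],
      ![3 * (‖w - y‖ ^ 5)⁻¹ * (w - y) 0 * (w - y) 0 - (‖w - y‖ ^ 3)⁻¹,
        3 * (‖w - y‖ ^ 5)⁻¹ * (w - y) 0 * (w - y) 1,
        3 * (‖w - y‖ ^ 5)⁻¹ * (w - y) 0 * (w - y) 2]] with hC1
  have hf1 : (fun s => cross3 (deriv φ s) (T (φ s - y)) 1)
      = fun s => ∑ a, ∑ b, C1 a b * (deriv φ s a * (φ s - y) b) := by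
    funext s
    show deriv φ s 2 * T (φ s - y) 0 - deriv φ s 0 * T (φ s - y) 2 = _
    rw [hTval, hTval]
    simp only [hC1, Fin.sum_univ_three, Matrix.cons_val_zero, Matrix.cons_val_one,
      Matrix.head_cons, Matrix.cons_val_two, Matrix.tail_cons]
    ring
  set C2 : Fin 3 → Fin 3 → ℝ :=
    ![![3 * (‖w - y‖ ^ 5)⁻¹ * (w - y) 1 * (w - y) 0,
        3 * (‖w - y‖ ^ 5)⁻¹ * (w - y) 1 * (w - y) 1 - (‖w - y‖ ^ 3)⁻¹,
        3 * (‖w - y‖ ^ 5)⁻¹ * (w - y) 1 * (w - y) 2],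
      ![(‖w - y‖ ^ 3)⁻¹ - 3 * (‖w - y‖ ^ 5)⁻¹ * (w - y) 0 * (w - y) 0,
        -(3 * (‖w - y‖ ^ 5)⁻¹ * (w - y) 0 * (w - y) 1),
        -(3 * (‖w - y‖ ^ 5)⁻¹ * (w - y) 0 * (w - y) 2)],
      ![0, 0, 0]] with hC2
  have hf2 : (fun s => cross3 (deriv φ s) (T (φ s - y)) 2)
      = fun s => ∑ a, ∑ b, C2 a b * (deriv φ s a * (φ s - y) b) := by
    funext s
    show deriv φ s 0 * T (φ s - y) 1 - deriv φ s 1 * T (φ s - y) 0 = _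
    rw [hTval, hTval]
    simp only [hC2, Fin.sum_univ_three, Matrix.cons_val_zero, Matrix.cons_val_one,
      Matrix.head_cons, Matrix.cons_val_two, Matrix.tail_cons]
    ring
  have comp1 : (∫ s in (0 : ℝ)..Lc, cross3 (deriv φ s) (T (φ s - y))) 1
      = curl3 (fun w' =>
          (WithLp.equiv 2 (Fin 3 → ℝ)).symm
            (fun i => ∑ j, M j i * gradient fundSol (w' - y) j)) w 1 := by
    rw [hcomp 1, hf1, hsum C1]
    have hR : curl3 (fun w' =>
          (WithLp.equiv 2 (Fin 3 → ℝ)).symm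
            (fun i => ∑ j, M j i * gradient fundSol (w' - y) j)) w 1
        = (∑ j, M j 0 * gradD y w j (EuclideanSpace.single 2 1))
          - (∑ j, M j 2 * gradD y w j (EuclideanSpace.single 0 1)) := by
      show fderiv ℝ (fun x : E3 => ∑ j, M j 0 * gradient fundSol (x - y) j) w
          (EuclideanSpace.single 2 1)
        - fderiv ℝ (fun x : E3 => ∑ j, M j 2 * gradient fundSol (x - y) j) w
          (EuclideanSpace.single 0 1) = _
      rw [hcurl 0 2, hcurl 2 0]
    rw [hR]
    simp only [hC1, Fin.sum_univ_three, Matrix.cons_val_zero, Matrix.cons_val_one,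
      Matrix.head_cons, Matrix.cons_val_two, Matrix.tail_cons, gradD_apply, hM',
      hdiag, Fin.reduceEq, reduceIte, mul_zero, zero_mul, add_zero, zero_add, mul_one, one_mul]
    rw [hskew 0 1, hskew 0 2, hskew 1 2]
    field_simp
    ring
  have comp2 : (∫ s in (0 : ℝ)..Lc, cross3 (deriv φ s) (T (φ s - y))) 2
      = curl3 (fun w' =>
          (WithLp.equiv 2 (Fin 3 → ℝ)).symm
            (fun i => ∑ j, M j i * gradient fundSol (w' - y) j)) w 2 := by
    rw [hcomp 2, hf2, hsum C2]
    have hR : curl3 (fun w' =>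
          (WithLp.equiv 2 (Fin 3 → ℝ)).symm
            (fun i => ∑ j, M j i * gradient fundSol (w' - y) j)) w 2
        = (∑ j, M j 1 * gradD y w j (EuclideanSpace.single 0 1))
          - (∑ j, M j 0 * gradD y w j (EuclideanSpace.single 1 1)) := by
      show fderiv ℝ (fun x : E3 => ∑ j, M j 1 * gradient fundSol (x - y) j) w
          (EuclideanSpace.single 0 1)
        - fderiv ℝ (fun x : E3 => ∑ j, M j 0 * gradient fundSol (x - y) j) w
          (EuclideanSpace.single 1 1) = _
      rw [hcurl 1 0, hcurl 0 1]
    rw [hR]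
    simp only [hC2, Fin.sum_univ_three, Matrix.cons_val_zero, Matrix.cons_val_one,
      Matrix.head_cons, Matrix.cons_val_two, Matrix.tail_cons, gradD_apply, hM',
      hdiag, Fin.reduceEq, reduceIte, mul_zero, zero_mul, add_zero, zero_add, mul_one, one_mul]
    rw [hskew 0 1, hskew 0 2, hskew 1 2]
    field_simp
    ring
  apply PiLp.ext
  intro i
  fin_cases i
  · exact comp0
  · exact comp1
  · exact comp2
end
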